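/- Let (𝔩 → 𝔥 → 𝔤, ▷, {−,−}) be a 2-crossed module of Lie algebras. Define a bilinear map 𝔥 × 𝔩 → 𝔩 by b ▷ c := −{t(c), b}. Then (𝔩 → 𝔥, ▷) with the homomorphism t : 𝔩 → 𝔥 is a crossed module of Lie algebras: the map b ▷ − is an action of 𝔥 on 𝔩 by derivations ([b₁,b₂] ▷ c = b₁ ▷ (b₂ ▷ c) − b₂ ▷ (b₁ ▷ c) and b ▷ [c₁,c₂] = [b ▷ c₁, c₂] + [c₁, b ▷ c₂]), t(b ▷ c) = [b, t(c)], and t(c₁) ▷ c₂ = [c₁, c₂]. -/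

import Mathlib

/-- For a 2-crossed module of Lie algebras `(𝔩 → 𝔥 → 𝔤, ▷, {−,−})`, the map
`b ▷ c := −{t(c), b}` makes `(𝔩 → 𝔥)` a crossed module of Lie algebras: `𝔥` acts on `𝔩` by
derivations, `t(b ▷ c) = [b, t(c)]` and the Peiffer identity `t(c₁) ▷ c₂ = [c₁, c₂]`
holds. -/
theorem two_crossed_module_truncation_is_crossed_module
    {l : Type*} [LieRing l] [LieAlgebra ℝ l]
    {h : Type*} [LieRing h] [LieAlgebra ℝ h]
    {g : Type*} [LieRing g] [LieAlgebra ℝ g]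
    (t₁ : l →ₗ⁅ℝ⁆ h) (t₂ : h →ₗ⁅ℝ⁆ g)
    (h_tt : ∀ c : l, t₂ (t₁ c) = 0)
    (actH : g →ₗ[ℝ] h →ₗ[ℝ] h) (actL : g →ₗ[ℝ] l →ₗ[ℝ] l)
    (h_actH : ∀ (a₁ a₂ : g) (b : h),
      actH ⁅a₁, a₂⁆ b = actH a₁ (actH a₂ b) - actH a₂ (actH a₁ b))
    (h_actL : ∀ (a₁ a₂ : g) (c : l),
      actL ⁅a₁, a₂⁆ c = actL a₁ (actL a₂ c) - actL a₂ (actL a₁ c))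
    (h_derH : ∀ (a : g) (b₁ b₂ : h),
      actH a ⁅b₁, b₂⁆ = ⁅actH a b₁, b₂⁆ + ⁅b₁, actH a b₂⁆)
    (h_derL : ∀ (a : g) (c₁ c₂ : l),
      actL a ⁅c₁, c₂⁆ = ⁅actL a c₁, c₂⁆ + ⁅c₁, actL a c₂⁆)
    (h_equivL : ∀ (a : g) (c : l), t₁ (actL a c) = actH a (t₁ c))
    (h_equivH : ∀ (a : g) (b : h), t₂ (actH a b) = ⁅a, t₂ b⁆)
    (pf : h →ₗ[ℝ] h →ₗ[ℝ] l)
    (h_pf_equiv : ∀ (a : g) (b₁ b₂ : h),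
      actL a (pf b₁ b₂) = pf (actH a b₁) b₂ + pf b₁ (actH a b₂))
    (h_pf₁ : ∀ b₁ b₂ : h, t₁ (pf b₁ b₂) = ⁅b₁, b₂⁆ - actH (t₂ b₁) b₂)
    (h_pf₂ : ∀ c₁ c₂ : l, pf (t₁ c₁) (t₁ c₂) = ⁅c₁, c₂⁆)
    (h_pf₃ : ∀ b₁ b₂ b₃ : h,
      pf b₁ ⁅b₂, b₃⁆ = pf (t₁ (pf b₁ b₂)) b₃ - pf (t₁ (pf b₁ b₃)) b₂)
    (h_pf₄ : ∀ b₁ b₂ b₃ : h,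
      pf ⁅b₁, b₂⁆ b₃ = actL (t₂ b₁) (pf b₂ b₃) + pf b₁ ⁅b₂, b₃⁆
        - actL (t₂ b₂) (pf b₁ b₃) - pf b₂ ⁅b₁, b₃⁆)
    (h_pf₅ : ∀ (b : h) (c : l), - actL (t₂ b) c = pf (t₁ c) b + pf b (t₁ c))
    -- the 𝔥-action on 𝔩:  b ▷ c := −{t(c), b}
    (act : h → l → l) (h_act : ∀ (b : h) (c : l), act b c = - pf (t₁ c) b) :
    -- [b₁,b₂] ▷ c = b₁ ▷ (b₂ ▷ c) − b₂ ▷ (b₁ ▷ c)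
    (∀ (b₁ b₂ : h) (c : l),
      act ⁅b₁, b₂⁆ c = act b₁ (act b₂ c) - act b₂ (act b₁ c)) ∧
    -- b ▷ [c₁,c₂] = [b ▷ c₁, c₂] + [c₁, b ▷ c₂]
    (∀ (b : h) (c₁ c₂ : l),
      act b ⁅c₁, c₂⁆ = ⁅act b c₁, c₂⁆ + ⁅c₁, act b c₂⁆) ∧
    -- t(b ▷ c) = [b, t(c)]
    (∀ (b : h) (c : l), t₁ (act b c) = ⁅b, t₁ c⁆) ∧
    -- Peiffer identity: t(c₁) ▷ c₂ = [c₁, c₂]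
    (∀ c₁ c₂ : l, act (t₁ c₁) c₂ = ⁅c₁, c₂⁆) := by
  refine ⟨?_, ?_, ?_, ?_⟩
  · -- action axiom
    intro b₁ b₂ c
    have h3 := h_pf₃ (t₁ c) b₁ b₂
    simp only [h_act, map_neg, map_neg, LinearMap.neg_apply, neg_neg, h3]
    abel
  · -- derivation property
    intro b c₁ c₂
    have key : pf (t₁ ⁅c₁, c₂⁆) b = ⁅pf (t₁ c₁) b, c₂⁆ - ⁅pf (t₁ c₂) b, c₁⁆ := by
      have h1 := h_pf₄ (t₁ c₁) (t₁ c₂) b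
      rw [h_pf₃ (t₁ c₁) (t₁ c₂) b, h_pf₃ (t₁ c₂) (t₁ c₁) b] at h1
      simp only [h_pf₂, h_tt, map_zero, LinearMap.zero_apply, ← LieHom.map_lie t₁] at h1
      rw [show (⁅c₂, c₁⁆ : l) = -⁅c₁, c₂⁆ by rw [lie_skew], map_neg, map_neg,
        LinearMap.neg_apply] at h1
      -- h1 : X = 0 + (X - A) - 0 - (-X - B)
      rw [← sub_eq_zero] at h1 ⊢
      rw [show pf (t₁ ⁅c₁, c₂⁆) b - (⁅pf (t₁ c₁) b, c₂⁆ - ⁅pf (t₁ c₂) b, c₁⁆)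
          = -(pf (t₁ ⁅c₁, c₂⁆) b
            - (0 + (pf (t₁ ⁅c₁, c₂⁆) b - ⁅pf (t₁ c₁) b, c₂⁆) - 0
              - (-pf (t₁ ⁅c₁, c₂⁆) b - ⁅pf (t₁ c₂) b, c₁⁆))) from by abel, h1, neg_zero]
    simp only [h_act, key, neg_lie, lie_neg]
    rw [show (⁅c₁, pf (t₁ c₂) b⁆ : l) = -⁅pf (t₁ c₂) b, c₁⁆ from (lie_skew _ _).symm]
    abel
  · intro b c
    rw [h_act, map_neg, h_pf₁, h_tt, map_zero, LinearMap.zero_apply, sub_zero, lie_skew]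
  · intro c₁ c₂
    rw [h_act, h_pf₂, lie_skew]
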